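/- For each n ≥ 3, every dihedral subgroup of PGL₃(ℂ) of order 2n is conjugate in PGL₃(ℂ) to a subgroup of PGL₃(ℝ); i.e., dihedral groups D_{2n} in PGL₃(ℂ) are definable over ℝ. -/

import Mathlib

open Matrix

noncomputable section

abbrev PGL3C := GL (Fin 3) ℂ ⧸ Subgroup.center (GL (Fin 3) ℂ)

def proj : GL (Fin 3) ℂ →* PGL3C := QuotientGroup.mk' _

def sigmaGL : GL (Fin 3) ℂ ≃* GL (Fin 3) ℂ :=
  Units.mapEquiv (Complex.conjAe.toRingEquiv.mapMatrix.toMulEquiv)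

lemma sigma_center :
    (Subgroup.center (GL (Fin 3) ℂ)).map sigmaGL.toMonoidHom
      = Subgroup.center (GL (Fin 3) ℂ) := by
  ext x
  simp only [Subgroup.mem_map, Subgroup.mem_center_iff]
  constructor
  · rintro ⟨y, hy, rfl⟩ g
    have := hy (sigmaGL.symm g)
    calc g * sigmaGL y = sigmaGL (sigmaGL.symm g * y) := by
          simp [_root_.map_mul]
      _ = sigmaGL (y * sigmaGL.symm g) := by rw [this]
      _ = sigmaGL y * g := by simp [_root_.map_mul]
  · intro hx
    refine ⟨sigmaGL.symm x, fun g => ?_, by simp⟩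
    have := hx (sigmaGL g)
    calc g * sigmaGL.symm x = sigmaGL.symm (sigmaGL g * x) := by simp [_root_.map_mul]
      _ = sigmaGL.symm (x * sigmaGL g) := by rw [this]
      _ = sigmaGL.symm x * g := by simp [_root_.map_mul]

def sigmaPGL : PGL3C ≃* PGL3C :=
  QuotientGroup.congr _ _ sigmaGL sigma_center

def PGL3R : Subgroup PGL3C :=
  ((Units.map ((algebraMap ℝ ℂ).mapMatrix.toMonoidHom :
      Matrix (Fin 3) (Fin 3) ℝ →* Matrix (Fin 3) (Fin 3) ℂ)).range).map proj

abbrev M3 := Matrix (Fin 3) (Fin 3) ℂ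

/-- scalar unit -/
def sU (c : ℂ) (hc : c ≠ 0) : GL (Fin 3) ℂ :=
  ⟨c • 1, c⁻¹ • 1, by rw [smul_mul_smul_comm, mul_inv_cancel₀ hc, one_mul, one_smul],
    by rw [smul_mul_smul_comm, inv_mul_cancel₀ hc, one_mul, one_smul]⟩

@[simp] lemma sU_val (c : ℂ) (hc : c ≠ 0) : ((sU c hc : GL (Fin 3) ℂ) : M3) = c • 1 := rfl

lemma sU_center (c : ℂ) (hc : c ≠ 0) : sU c hc ∈ Subgroup.center (GL (Fin 3) ℂ) := by
  rw [Subgroup.mem_center_iff]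
  intro g
  have : g.val * (c • 1) = (c • (1 : M3)) * g.val := by
    rw [mul_smul_comm, smul_mul_assoc, mul_one, one_mul]
  exact Units.ext this

lemma proj_sU (c : ℂ) (hc : c ≠ 0) : proj (sU c hc) = 1 := by
  rw [← MonoidHom.mem_ker, proj, QuotientGroup.ker_mk']
  exact sU_center c hc

lemma center_scalar {u : GL (Fin 3) ℂ} (hu : u ∈ Subgroup.center (GL (Fin 3) ℂ)) :
    ∃ c : ℂ, c ≠ 0 ∧ (u : M3) = c • 1 := by
  rw [Subgroup.mem_center_iff] at hu
  have hcomm : Pairwise fun i j => Commute (single i j (1:ℂ)) (u : M3) := by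
    intro i j hij
    set E : M3 := single i j (1:ℂ) with hE
    have hE2 : E * E = 0 := by
      rw [hE, single_mul_single_of_ne]
      exact fun h => hij h.symm
    have hT : (1 + E) * (1 - E) = 1 := by
      have : (1 + E) * (1 - E) = 1 + E - E - E * E := by noncomm_ring
      rw [this, hE2]; simp
    have hT' : (1 - E) * (1 + E) = 1 := by
      have : (1 - E) * (1 + E) = 1 + E - E - E * E := by noncomm_ring
      rw [this, hE2]; simp
    have := hu ⟨1 + E, 1 - E, hT, hT'⟩
    have hval : ((⟨1 + E, 1 - E, hT, hT'⟩ : GL (Fin 3) ℂ) : M3) * u.val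
        = u.val * ((⟨1 + E, 1 - E, hT, hT'⟩ : GL (Fin 3) ℂ) : M3) := by
      exact congrArg Units.val this
    show E * u.val = u.val * E
    have : (1 + E) * u.val = u.val * (1 + E) := hval
    rw [add_mul, mul_add, one_mul, mul_one] at this
    exact add_left_cancel this
  obtain ⟨r, hr⟩ := mem_range_scalar_of_commute_single hcomm
  refine ⟨r, ?_, ?_⟩
  · rintro rfl
    have : (u : M3) = 0 := by
      rw [← hr]; show Matrix.diagonal _ = 0; exact Matrix.diagonal_zero
    have h1 : (1 : M3) = 0 := by
      calc (1 : M3) = u.val * u.inv := u.val_inv.symm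
        _ = 0 := by rw [this, zero_mul]
    exact one_ne_zero (congrFun (congrFun h1 0) 0)
  · rw [← hr]; simp [Matrix.scalar, Matrix.smul_one_eq_diagonal]

lemma proj_surj : Function.Surjective proj := QuotientGroup.mk'_surjective _

lemma lift_pow {m : ℕ} (hm : 0 < m) (x : PGL3C) (hx : x ^ m = 1) :
    ∃ A : GL (Fin 3) ℂ, proj A = x ∧ A ^ m = 1 := by
  obtain ⟨A₀, hA₀⟩ := proj_surj x
  have hker : A₀ ^ m ∈ Subgroup.center (GL (Fin 3) ℂ) := by
    rw [← QuotientGroup.ker_mk' (Subgroup.center (GL (Fin 3) ℂ))]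
    show A₀ ^ m ∈ (proj).ker
    rw [MonoidHom.mem_ker, map_pow, hA₀, hx]
  obtain ⟨c, hc, hcval⟩ := center_scalar hker
  obtain ⟨lam, hlam⟩ := IsAlgClosed.exists_pow_nat_eq (c⁻¹) hm
  have hlam0 : lam ≠ 0 := by
    intro h; rw [h, zero_pow hm.ne'] at hlam; exact inv_ne_zero hc hlam.symm
  refine ⟨sU lam hlam0 * A₀, ?_, ?_⟩
  · rw [_root_.map_mul, proj_sU, one_mul, hA₀]
  · have hcomm : Commute (sU lam hlam0) A₀ :=
      (Subgroup.mem_center_iff.mp (sU_center lam hlam0) A₀).symm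
    rw [hcomm.mul_pow]
    have : ((sU lam hlam0)^m : GL (Fin 3) ℂ).val * (A₀ ^ m).val = ((1 : GL (Fin 3) ℂ) : M3) := by
      rw [Units.val_pow_eq_pow_val, sU_val, hcval, smul_pow, one_pow, smul_mul_smul_comm,
        one_mul, hlam, inv_mul_cancel₀ hc, one_smul]
      rfl
    exact Units.ext this


lemma pow_eig {R M : Type*} [CommRing R] [AddCommGroup M] [Module R M]
    {f : Module.End R M} {μ : R} {v : M} (hv : f v = μ • v) (k : ℕ) :
    (f ^ k) v = μ ^ k • v := by
  induction k with
  | zero => simp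
  | succ m ih =>
    rw [pow_succ, pow_succ, Module.End.mul_apply, hv, _root_.map_smul, ih, smul_smul, mul_comm]

lemma invol3 {x y z : ℂ} {σ : ℂ → ℂ}
    (hxy : x ≠ y) (hxz : x ≠ z) (hyz : y ≠ z)
    (hx : σ x = x ∨ σ x = y ∨ σ x = z)
    (hy : σ y = x ∨ σ y = y ∨ σ y = z)
    (hz : σ z = x ∨ σ z = y ∨ σ z = z)
    (hix : σ (σ x) = x) (hiy : σ (σ y) = y) (hiz : σ (σ z) = z)
    (hnall : ¬(σ x = x ∧ σ y = y ∧ σ z = z)) :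
    ∃ a b d : ℂ, a ≠ b ∧ a ≠ d ∧ b ≠ d ∧ ({x, y, z} : Set ℂ) = {a, b, d} ∧
      σ a = a ∧ σ b = d ∧ σ d = b := by
  rcases hx with h1 | h1 | h1
  · rcases hy with h2 | h2 | h2
    · exfalso; apply hxy; have : y = x := by rw [← hiy, h2, h1]
      exact this.symm
    · rcases hz with h3 | h3 | h3
      · exfalso; apply hxz; have : z = x := by rw [← hiz, h3, h1]
        exact this.symm
      · exfalso; apply hyz; have : z = y := by rw [← hiz, h3, h2]
        exact this.symm
      · exact absurd ⟨h1, h2, h3⟩ hnall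
    · exact ⟨x, y, z, hxy, hxz, hyz, rfl, h1, h2, by rw [← h2, hiy]⟩
  · have h2 : σ y = x := by rw [← h1, hix]
    rcases hz with h3 | h3 | h3
    · exfalso; apply hyz; have : z = y := by rw [← hiz, h3, h1]
      exact this.symm
    · exfalso; apply hxz; have : z = x := by rw [← hiz, h3, h2]
      exact this.symm
    · refine ⟨z, x, y, hxz.symm, hyz.symm, hxy, ?_, h3, h1, h2⟩
      ext w; simp only [Set.mem_insert_iff, Set.mem_singleton_iff]; tauto
  · have h3 : σ z = x := by rw [← h1, hix]
    rcases hy with h2 | h2 | h2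
    · exfalso; apply hyz; have : y = z := by rw [← hiy, h2, h1]
      exact this
    · refine ⟨y, x, z, hxy.symm, hyz, hxz, ?_, h2, h1, h3⟩
      ext w; simp only [Set.mem_insert_iff, Set.mem_singleton_iff]; tauto
    · exfalso; apply hxy; have : y = x := by rw [← hiy, h2, h3]
      exact this.symm

lemma eig_structure {n : ℕ} (hn : 3 ≤ n) (A B : GL (Fin 3) ℂ) {c : ℂ} (hc : c ≠ 0)
    (hA : A ^ n = 1)
    (hns : ∀ k : ℕ, 0 < k → k < n → ∀ lam : ℂ, (A : M3) ^ k ≠ lam • 1)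
    (hrel : (B : M3) * (A : M3) = c • (((A⁻¹ : GL (Fin 3) ℂ) : M3) * (B : M3))) :
    ∃ ω₀ ζ : ℂ, ω₀ ≠ 0 ∧ ζ ≠ 0 ∧ ζ ^ n = 1 ∧ (∀ k : ℕ, 0 < k → k < n → ζ ^ k ≠ 1) ∧
      c = ω₀ ^ 2 ∧ ω₀ ^ n = 1 ∧
      (∃ v₀ : Fin 3 → ℂ, v₀ ≠ 0 ∧ (A : M3) *ᵥ v₀ = ω₀ • v₀) ∧
      (∃ v₁ : Fin 3 → ℂ, v₁ ≠ 0 ∧ (A : M3) *ᵥ v₁ = (ω₀ * ζ) • v₁) := by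
  have hn0 : n ≠ 0 := by omega
  set 𝔸 : M3 := (A : M3) with h𝔸
  set f : Module.End ℂ (Fin 3 → ℂ) := Matrix.toLinAlgEquiv' 𝔸 with hf
  have hfapp : ∀ v, f v = 𝔸 *ᵥ v := fun v => rfl
  have h𝔸n : 𝔸 ^ n = 1 := by
    have := congrArg Units.val hA
    rwa [Units.val_pow_eq_pow_val] at this
  have hfn : f ^ n = 1 := by
    rw [hf, ← map_pow, h𝔸n, _root_.map_one]
  -- semisimplicity
  have hss : f.IsSemisimple := by
    apply Module.End.isSemisimple_of_squarefree_aeval_eq_zero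
      (p := Polynomial.X ^ n - Polynomial.C 1)
    · exact (Polynomial.separable_X_pow_sub_C (1:ℂ) (by exact_mod_cast (Nat.cast_ne_zero (R := ℂ)).mpr hn0) one_ne_zero).squarefree
    · simp [Polynomial.aeval_X_pow, hfn, map_pow]
  -- eigenspaces span
  set E : ℂ → Submodule ℂ (Fin 3 → ℂ) := f.eigenspace with hE
  have hspan : ⨆ μ, E μ = ⊤ := by
    have h1 := Module.End.iSup_maxGenEigenspace_eq_top f
    have h2 := hss.isFinitelySemisimple.maxGenEigenspace_eq_eigenspace
    simp_rw [h2] at h1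
    exact h1
  set Ω : Set ℂ := {μ | E μ ≠ ⊥} with hΩ
  -- scalar criterion
  have hscal : ∀ (k : ℕ) (lam : ℂ), (∀ μ ∈ Ω, μ ^ k = lam) → 𝔸 ^ k = lam • 1 := by
    intro k lam hall
    have hker : ∀ μ, E μ ≤ LinearMap.ker (f ^ k - lam • (1 : Module.End ℂ (Fin 3 → ℂ))) := by
      intro μ
      by_cases hμ : μ ∈ Ω
      · intro v hv
        rw [Module.End.mem_eigenspace_iff] at hv
        have hpow : (f ^ k) v = μ ^ k • v := pow_eig hv k
        rw [LinearMap.mem_ker, LinearMap.sub_apply, hpow, hall μ hμ]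
        simp
      · rw [hΩ, Set.mem_setOf_eq, not_not] at hμ
        rw [hμ]; exact bot_le
    have : (⊤ : Submodule ℂ (Fin 3 → ℂ)) ≤ LinearMap.ker (f ^ k - lam • 1) := by
      rw [← hspan]; exact iSup_le hker
    have hfk : f ^ k = lam • 1 := by
      apply sub_eq_zero.mp
      exact LinearMap.ker_eq_top.mp (top_le_iff.mp this)
    have : Matrix.toLinAlgEquiv' (𝔸 ^ k) = Matrix.toLinAlgEquiv' ((lam • 1 : M3)) := by
      rw [map_pow, _root_.map_smul, _root_.map_one]; rw [hf] at hfk; exact hfk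
    exact (Matrix.toLinAlgEquiv' (R := ℂ) (n := Fin 3)).injective this
  -- membership facts
  have hroot : ∀ μ ∈ Ω, μ ^ n = 1 ∧ μ ≠ 0 := by
    intro μ hμ
    obtain ⟨v, hv, hv0⟩ := (Submodule.ne_bot_iff _).mp hμ
    rw [Module.End.mem_eigenspace_iff] at hv
    have hpow : (f ^ n) v = μ ^ n • v := pow_eig hv n
    rw [hfn] at hpow
    have : (μ ^ n - 1) • v = 0 := by
      rw [sub_smul, one_smul, ← hpow]; simp
    have h1 : μ ^ n = 1 := by
      rcases smul_eq_zero.mp this with h | h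
      · exact sub_eq_zero.mp h
      · exact absurd h hv0
    exact ⟨h1, fun h0 => by simp [h0, zero_pow hn0] at h1⟩
  -- B movement
  have hBinv : ∀ v : Fin 3 → ℂ, ((B⁻¹ : GL (Fin 3) ℂ) : M3) *ᵥ ((B : M3) *ᵥ v) = v := by
    intro v
    rw [Matrix.mulVec_mulVec]
    have h1 : ((B⁻¹ : GL (Fin 3) ℂ) : M3) * (B : M3) = 1 := congrArg Units.val (inv_mul_cancel B)
    rw [h1, Matrix.one_mulVec]
  have hB0 : ∀ v : Fin 3 → ℂ, (B : M3) *ᵥ v = 0 → v = 0 := by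
    intro v hv
    have h1 := hBinv v
    rw [hv, Matrix.mulVec_zero] at h1
    exact h1.symm
  have hAAi : 𝔸 * ((A⁻¹ : GL (Fin 3) ℂ) : M3) = 1 := congrArg Units.val (mul_inv_cancel A)
  have hmove : ∀ (μ : ℂ), μ ≠ 0 → ∀ v, 𝔸 *ᵥ v = μ • v →
      𝔸 *ᵥ ((B : M3) *ᵥ v) = (c * μ⁻¹) • ((B : M3) *ᵥ v) := by
    intro μ hμ v hv
    have h1 : μ • ((B : M3) *ᵥ v) = c • (((A⁻¹ : GL (Fin 3) ℂ) : M3) *ᵥ ((B : M3) *ᵥ v)) := by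
      calc μ • ((B : M3) *ᵥ v) = (B : M3) *ᵥ (μ • v) := (Matrix.mulVec_smul _ _ _).symm
        _ = (B : M3) *ᵥ (𝔸 *ᵥ v) := by rw [hv]
        _ = ((B : M3) * 𝔸) *ᵥ v := Matrix.mulVec_mulVec _ _ _
        _ = (c • (((A⁻¹ : GL (Fin 3) ℂ) : M3) * (B : M3))) *ᵥ v := by rw [hrel]
        _ = c • ((((A⁻¹ : GL (Fin 3) ℂ) : M3) * (B : M3)) *ᵥ v) := Matrix.smul_mulVec _ _ _
        _ = c • (((A⁻¹ : GL (Fin 3) ℂ) : M3) *ᵥ ((B : M3) *ᵥ v)) := by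
            rw [← Matrix.mulVec_mulVec]
    have h2 : μ • (𝔸 *ᵥ ((B : M3) *ᵥ v)) = c • ((B : M3) *ᵥ v) := by
      rw [← Matrix.mulVec_smul, h1, Matrix.mulVec_smul, Matrix.mulVec_mulVec, hAAi,
        Matrix.one_mulVec]
    calc 𝔸 *ᵥ ((B : M3) *ᵥ v) = (μ⁻¹ * μ) • (𝔸 *ᵥ ((B : M3) *ᵥ v)) := by
          rw [inv_mul_cancel₀ hμ, one_smul]
      _ = μ⁻¹ • (c • ((B : M3) *ᵥ v)) := by rw [← smul_smul, h2]
      _ = (c * μ⁻¹) • ((B : M3) *ᵥ v) := by rw [smul_smul, mul_comm]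
  have hmemE : ∀ (μ : ℂ) (v : Fin 3 → ℂ), v ∈ E μ ↔ 𝔸 *ᵥ v = μ • v := by
    intro μ v
    rw [hE, Module.End.mem_eigenspace_iff]
    constructor
    · intro h; rw [← hfapp v]; exact h
    · intro h; rw [hfapp v]; exact h
  have hσΩ : ∀ μ ∈ Ω, c * μ⁻¹ ∈ Ω := by
    intro μ hμ
    obtain ⟨v, hv, hv0⟩ := (Submodule.ne_bot_iff _).mp hμ
    have hμ0 : μ ≠ 0 := (hroot μ hμ).2
    have hmem : (B : M3) *ᵥ v ∈ E (c * μ⁻¹) :=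
      (hmemE _ _).mpr (hmove μ hμ0 v ((hmemE _ _).mp hv))
    exact (Submodule.ne_bot_iff _).mpr ⟨_, hmem, fun h => hv0 (hB0 v h)⟩
  have hsq : ∀ μ : ℂ, μ ≠ 0 → c * μ⁻¹ = μ → c = μ ^ 2 := by
    intro μ hμ h; field_simp at h; rw [h]
  -- cardinality of Ω
  haveI instF : Fintype {μ : ℂ // E μ ≠ ⊥} :=
    (Module.End.eigenspaces_iSupIndep f).fintypeNeBotOfFiniteDimensional
  haveI instFin : Finite ↥Ω := @Finite.of_fintype _ instF
  have hΩfin : Ω.Finite := Ω.toFinite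
  have hΩcard : Ω.ncard ≤ 3 := by
    have h1 := (Module.End.eigenspaces_iSupIndep f).subtype_ne_bot_le_finrank
    rw [Module.finrank_fin_fun] at h1
    have h3 : Ω.ncard = @Fintype.card _ instF := by
      rw [← Nat.card_coe_set_eq]
      exact @Nat.card_eq_fintype_card _ instF
    rw [h3]
    exact h1
  have hΩne : Ω.Nonempty := by
    by_contra h
    rw [Set.not_nonempty_iff_eq_empty] at h
    have hall : ∀ μ : ℂ, E μ = ⊥ := by
      intro μ
      by_contra hne
      have : μ ∈ Ω := hne
      rw [h] at this
      exact this
    have hbot : (⊥ : Submodule ℂ (Fin 3 → ℂ)) = ⊤ := by rw [← hspan]; simp [hall]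
    exact absurd hbot bot_ne_top
  have h123 : Ω.ncard = 1 ∨ Ω.ncard = 2 ∨ Ω.ncard = 3 := by
    have hpos := (Set.ncard_pos hΩfin).mpr hΩne
    omega
  rcases h123 with h1 | h2 | h3
  · -- |Ω| = 1 : A is scalar, contradiction
    exfalso
    obtain ⟨x, hx⟩ := Set.ncard_eq_one.mp h1
    apply hns 1 one_pos (by omega) x
    have h := hscal 1 x (fun μ hμ => by
      rw [hx, Set.mem_singleton_iff] at hμ; rw [hμ, pow_one])
    rw [pow_one]
    rwa [pow_one] at h
  · -- |Ω| = 2 : contradiction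
    exfalso
    obtain ⟨x, y, hxy, hΩ2⟩ := Set.ncard_eq_two.mp h2
    have hxΩ : x ∈ Ω := by rw [hΩ2]; exact Set.mem_insert _ _
    have hyΩ : y ∈ Ω := by rw [hΩ2]; exact Set.mem_insert_of_mem _ rfl
    have hx0 := (hroot x hxΩ).2
    have hy0 := (hroot y hyΩ).2
    have hσx := hσΩ x hxΩ
    have hσy := hσΩ y hyΩ
    rw [hΩ2, Set.mem_insert_iff, Set.mem_singleton_iff] at hσx hσy
    have hall2 : c = x ^ 2 → c = y ^ 2 → False := by
      intro hcx hcy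
      apply hns 2 two_pos (by omega) c
      apply hscal 2 c
      intro μ hμ
      rw [hΩ2, Set.mem_insert_iff, Set.mem_singleton_iff] at hμ
      rcases hμ with rfl | rfl
      · exact hcx.symm
      · exact hcy.symm
    have hswap : c * x⁻¹ = y ∧ c * y⁻¹ = x := by
      rcases hσx with hx1 | hx1
      · rcases hσy with hy1 | hy1
        · exfalso
          apply hxy
          have hcx : c = x ^ 2 := hsq x hx0 hx1
          have hcy : c = x * y := by
            rw [← hy1, mul_assoc, inv_mul_cancel₀ hy0, mul_one]
          rw [hcx] at hcy
          have hxx : x * x = x * y := by rw [← sq]; exact hcy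
          exact mul_left_cancel₀ hx0 hxx
        · exact (hall2 (hsq x hx0 hx1) (hsq y hy0 hy1)).elim
      · rcases hσy with hy1 | hy1
        · exact ⟨hx1, hy1⟩
        · exfalso
          apply hxy
          have hcy : c = y ^ 2 := hsq y hy0 hy1
          have hcx : c = x * y := by
            rw [← hx1, mul_comm c x⁻¹, ← mul_assoc, mul_inv_cancel₀ hx0, one_mul]
          rw [hcy] at hcx
          have hyy : y * y = x * y := by rw [← sq]; exact hcx
          exact (mul_right_cancel₀ hy0 hyy).symm
    obtain ⟨hx1, hy1⟩ := hswap
    have hmapsxy : ∀ v ∈ E x, (Matrix.mulVecLin (B : M3)) v ∈ E y := by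
      intro v hv
      rw [Matrix.mulVecLin_apply, hmemE, ← hx1]
      exact hmove x hx0 v ((hmemE _ _).mp hv)
    have hmapsyx : ∀ v ∈ E y, (Matrix.mulVecLin (B : M3)) v ∈ E x := by
      intro v hv
      rw [Matrix.mulVecLin_apply, hmemE, ← hy1]
      exact hmove y hy0 v ((hmemE _ _).mp hv)
    have hinj : ∀ (p q : Submodule ℂ (Fin 3 → ℂ))
        (h : ∀ v ∈ p, (Matrix.mulVecLin (B : M3)) v ∈ q),
        Function.Injective (LinearMap.restrict _ h) := by
      intro p q h u v huv
      apply Subtype.ext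
      have h1 : (B : M3) *ᵥ u.val = (B : M3) *ᵥ v.val := by
        have h2 := congrArg Subtype.val huv
        simpa [LinearMap.restrict_apply, Matrix.mulVecLin_apply] using h2
      have h2 : (B : M3) *ᵥ (u.val - v.val) = 0 := by
        rw [Matrix.mulVec_sub, h1, sub_self]
      exact sub_eq_zero.mp (hB0 _ h2)
    have hle1 : Module.finrank ℂ (E x) ≤ Module.finrank ℂ (E y) :=
      LinearMap.finrank_le_finrank_of_injective (hinj _ _ hmapsxy)
    have hle2 : Module.finrank ℂ (E y) ≤ Module.finrank ℂ (E x) :=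
      LinearMap.finrank_le_finrank_of_injective (hinj _ _ hmapsyx)
    have hsup : E x ⊔ E y = ⊤ := by
      apply le_antisymm le_top
      rw [← hspan]
      apply iSup_le
      intro μ
      by_cases hμx : μ = x
      · rw [hμx]; exact le_sup_left
      by_cases hμy : μ = y
      · rw [hμy]; exact le_sup_right
      have hninΩ : μ ∉ Ω := by rw [hΩ2]; simp [hμx, hμy]
      have hEμ : E μ = ⊥ := not_not.mp (fun hne => hninΩ hne)
      rw [hEμ]; exact bot_le
    have hdisj : Disjoint (E x) (E y) :=
      (Module.End.eigenspaces_iSupIndep f).pairwiseDisjoint hxy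
    have hfr := Submodule.finrank_sup_add_finrank_inf_eq (E x) (E y)
    rw [hsup, hdisj.eq_bot, finrank_top, finrank_bot, Module.finrank_fin_fun] at hfr
    omega
  · -- |Ω| = 3
    obtain ⟨x, y, z, hxy, hxz, hyz, hΩ3⟩ := Set.ncard_eq_three.mp h3
    have hmem3 : ∀ μ ∈ Ω, μ = x ∨ μ = y ∨ μ = z := by
      intro μ hμ
      rw [hΩ3] at hμ
      simpa using hμ
    have hxΩ : x ∈ Ω := by rw [hΩ3]; simp
    have hyΩ : y ∈ Ω := by rw [hΩ3]; simp
    have hzΩ : z ∈ Ω := by rw [hΩ3]; simp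
    have hx0 := (hroot x hxΩ).2
    have hy0 := (hroot y hyΩ).2
    have hz0 := (hroot z hzΩ).2
    have hinv2 : ∀ μ : ℂ, μ ≠ 0 → c * (c * μ⁻¹)⁻¹ = μ := by
      intro μ hμ
      field_simp
    have hnall : ¬((fun μ => c * μ⁻¹) x = x ∧ (fun μ => c * μ⁻¹) y = y ∧
        (fun μ => c * μ⁻¹) z = z) := by
      rintro ⟨hhx, hhy, hhz⟩
      apply hns 2 two_pos (by omega) c
      apply hscal 2 c
      intro μ hμ
      rcases hmem3 μ hμ with rfl | rfl | rfl
      · exact (hsq _ hx0 hhx).symm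
      · exact (hsq _ hy0 hhy).symm
      · exact (hsq _ hz0 hhz).symm
    obtain ⟨a, b, d, hab, had, hbd, hset, hsa, hsb, hsd⟩ :=
      invol3 (σ := fun μ => c * μ⁻¹) hxy hxz hyz (hmem3 _ (hσΩ x hxΩ)) (hmem3 _ (hσΩ y hyΩ)) (hmem3 _ (hσΩ z hzΩ))
        (hinv2 x hx0) (hinv2 y hy0) (hinv2 z hz0) hnall
    have hΩ' : Ω = {a, b, d} := hΩ3.trans hset
    have haΩ : a ∈ Ω := by rw [hΩ']; simp
    have hbΩ : b ∈ Ω := by rw [hΩ']; simp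
    have ha0 := (hroot a haΩ).2
    have hb0 := (hroot b hbΩ).2
    have han := (hroot a haΩ).1
    have hbn := (hroot b hbΩ).1
    have hca : c = a ^ 2 := hsq a ha0 hsa
    set ζ : ℂ := b * a⁻¹ with hζdef
    have hζ0 : ζ ≠ 0 := mul_ne_zero hb0 (inv_ne_zero ha0)
    have hbaζ : b = a * ζ := by rw [hζdef]; field_simp
    have hζn : ζ ^ n = 1 := by
      rw [hζdef, mul_pow, inv_pow, hbn, han, inv_one, mul_one]
    have hd : d = a * ζ⁻¹ := by
      have h1 : d = c * b⁻¹ := hsb.symm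
      rw [h1, hca, hbaζ]
      field_simp
    have hprim : ∀ k : ℕ, 0 < k → k < n → ζ ^ k ≠ 1 := by
      intro k hk1 hk2 hζk
      apply hns k hk1 hk2 (a ^ k)
      apply hscal k
      intro μ hμ
      rw [hΩ'] at hμ
      rcases (by simpa using hμ : μ = a ∨ μ = b ∨ μ = d) with rfl | rfl | rfl
      · rfl
      · rw [hbaζ, mul_pow, hζk, mul_one]
      · rw [hd, mul_pow, inv_pow, hζk, inv_one, mul_one]
    obtain ⟨v₀, hv₀E, hv₀0⟩ := (Submodule.ne_bot_iff _).mp haΩ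
    obtain ⟨v₁, hv₁E, hv₁0⟩ := (Submodule.ne_bot_iff _).mp hbΩ
    refine ⟨a, ζ, ha0, hζ0, hζn, hprim, hca, han, ⟨v₀, hv₀0, (hmemE _ _).mp hv₀E⟩,
      ⟨v₁, hv₁0, ?_⟩⟩
    rw [← hbaζ]
    exact (hmemE _ _).mp hv₁E



section CoreSection
variable {n : ℕ}

lemma move_eig (A B : GL (Fin 3) ℂ) {c : ℂ}
    (hrel : (B : M3) * (A : M3) = c • (((A⁻¹ : GL (Fin 3) ℂ) : M3) * (B : M3)))
    {μ : ℂ} (hμ : μ ≠ 0) (v : Fin 3 → ℂ) (hv : (A : M3) *ᵥ v = μ • v) :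
    (A : M3) *ᵥ ((B : M3) *ᵥ v) = (c * μ⁻¹) • ((B : M3) *ᵥ v) := by
  have hAAi : (A : M3) * ((A⁻¹ : GL (Fin 3) ℂ) : M3) = 1 := congrArg Units.val (mul_inv_cancel A)
  have h1 : μ • ((B : M3) *ᵥ v) = c • (((A⁻¹ : GL (Fin 3) ℂ) : M3) *ᵥ ((B : M3) *ᵥ v)) := by
    calc μ • ((B : M3) *ᵥ v) = (B : M3) *ᵥ (μ • v) := (Matrix.mulVec_smul _ _ _).symm
      _ = (B : M3) *ᵥ ((A : M3) *ᵥ v) := by rw [hv]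
      _ = ((B : M3) * (A : M3)) *ᵥ v := Matrix.mulVec_mulVec _ _ _
      _ = (c • (((A⁻¹ : GL (Fin 3) ℂ) : M3) * (B : M3))) *ᵥ v := by rw [hrel]
      _ = c • ((((A⁻¹ : GL (Fin 3) ℂ) : M3) * (B : M3)) *ᵥ v) := Matrix.smul_mulVec _ _ _
      _ = c • (((A⁻¹ : GL (Fin 3) ℂ) : M3) *ᵥ ((B : M3) *ᵥ v)) := by
          rw [← Matrix.mulVec_mulVec]
  have h2 : μ • ((A : M3) *ᵥ ((B : M3) *ᵥ v)) = c • ((B : M3) *ᵥ v) := by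
    rw [← Matrix.mulVec_smul, h1, Matrix.mulVec_smul, Matrix.mulVec_mulVec, hAAi,
      Matrix.one_mulVec]
  calc (A : M3) *ᵥ ((B : M3) *ᵥ v)
      = (μ⁻¹ * μ) • ((A : M3) *ᵥ ((B : M3) *ᵥ v)) := by rw [inv_mul_cancel₀ hμ, one_smul]
    _ = μ⁻¹ • (c • ((B : M3) *ᵥ v)) := by rw [← smul_smul, h2]
    _ = (c * μ⁻¹) • ((B : M3) *ᵥ v) := by rw [smul_smul, mul_comm]

lemma core (hn : 3 ≤ n) (A B : GL (Fin 3) ℂ) {c : ℂ} (hc : c ≠ 0)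
    (hA : A ^ n = 1) (hB : B ^ 2 = 1)
    (hns : ∀ k : ℕ, 0 < k → k < n → ∀ lam : ℂ, (A : M3) ^ k ≠ lam • 1)
    (hrel : (B : M3) * (A : M3) = c • (((A⁻¹ : GL (Fin 3) ℂ) : M3) * (B : M3))) :
    ∃ (P : GL (Fin 3) ℂ) (R S : Matrix (Fin 3) (Fin 3) ℝ) (ω ε : ℂ), ω ≠ 0 ∧ ε ≠ 0 ∧
      IsUnit R ∧ IsUnit S ∧
      (A : M3) * (P : M3) = (P : M3) * (ω • R.map Complex.ofReal) ∧
      ε • ((B : M3) * (P : M3)) = (P : M3) * S.map Complex.ofReal := by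
  have hn0 : n ≠ 0 := by omega
  obtain ⟨ω, ζ, hω0, hζ0, hζn, hprim, hcω, hωn, ⟨v₀, hv₀0, hv₀⟩, ⟨v₁, hv₁0, hv₁⟩⟩ :=
    eig_structure hn A B hc hA hns hrel
  have hB2 : (B : M3) * (B : M3) = 1 := by
    have := congrArg Units.val hB
    rwa [Units.val_pow_eq_pow_val, pow_two] at this
  have hBB : ∀ v : Fin 3 → ℂ, (B : M3) *ᵥ ((B : M3) *ᵥ v) = v := by
    intro v; rw [Matrix.mulVec_mulVec, hB2, Matrix.one_mulVec]
  have hB0 : ∀ v : Fin 3 → ℂ, (B : M3) *ᵥ v = 0 → v = 0 := by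
    intro v hv
    have := hBB v
    rw [hv, Matrix.mulVec_zero] at this
    exact this.symm
  -- distinctness of eigenvalues
  have hζ1 : ζ ≠ 1 := fun h => hprim 1 one_pos (by omega) (by rwa [pow_one])
  have hζ2 : ζ ^ 2 ≠ 1 := hprim 2 two_pos (by omega)
  have hζζ : ζ ≠ ζ⁻¹ := by
    intro h
    apply hζ2
    calc ζ ^ 2 = ζ * ζ := sq ζ
      _ = ζ * ζ⁻¹ := by rw [← h]
      _ = 1 := mul_inv_cancel₀ hζ0
  have hζi0 : ζ⁻¹ ≠ 0 := inv_ne_zero hζ0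
  have hζi1 : ζ⁻¹ ≠ 1 := fun h => hζ1 (by rw [← inv_inv ζ, h, inv_one])
  -- the fixed vector w for B
  have hcωω : c * ω⁻¹ = ω := by
    rw [hcω, sq, mul_assoc, mul_inv_cancel₀ hω0, mul_one]
  have hBv₀ : (A : M3) *ᵥ ((B : M3) *ᵥ v₀) = ω • ((B : M3) *ᵥ v₀) := by
    have := move_eig A B hrel hω0 v₀ hv₀
    rwa [hcωω] at this
  obtain ⟨w, ε, hε, hw0, hwA, hwB⟩ :
      ∃ (w : Fin 3 → ℂ) (ε : ℂ), (ε = 1 ∨ ε = -1) ∧ w ≠ 0 ∧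
        (A : M3) *ᵥ w = ω • w ∧ (B : M3) *ᵥ w = ε • w := by
    by_cases h : v₀ + (B : M3) *ᵥ v₀ = 0
    · refine ⟨v₀, -1, Or.inr rfl, hv₀0, hv₀, ?_⟩
      have h1 : (B : M3) *ᵥ v₀ = -v₀ := (neg_eq_of_add_eq_zero_right h).symm
      rw [h1, neg_one_smul]
    · refine ⟨v₀ + (B : M3) *ᵥ v₀, 1, Or.inl rfl, h, ?_, ?_⟩
      · rw [Matrix.mulVec_add, hv₀, hBv₀, smul_add]
      · rw [Matrix.mulVec_add, hBB, one_smul, add_comm]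
  have hε0 : ε ≠ 0 := by rcases hε with rfl | rfl <;> norm_num
  have hε2 : ε * ε = 1 := by rcases hε with rfl | rfl <;> norm_num
  -- second and third eigenvectors
  set v₂ : Fin 3 → ℂ := ε • ((B : M3) *ᵥ v₁) with hv₂def
  have hv₂0 : v₂ ≠ 0 := by
    rw [hv₂def]
    intro h
    rcases smul_eq_zero.mp h with h | h
    · exact hε0 h
    · exact hv₁0 (hB0 _ h)
  have hcωζ : c * (ω * ζ)⁻¹ = ω * ζ⁻¹ := by
    rw [hcω]; field_simp
  have hv₂A : (A : M3) *ᵥ v₂ = (ω * ζ⁻¹) • v₂ := by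
    rw [hv₂def, Matrix.mulVec_smul]
    have h1 := move_eig A B hrel (mul_ne_zero hω0 hζ0) v₁ hv₁
    rw [hcωζ] at h1
    rw [h1, smul_comm]
  have hv₁B : (B : M3) *ᵥ v₁ = ε • v₂ := by
    rw [hv₂def, smul_smul, hε2, one_smul]
  have hv₂B : (B : M3) *ᵥ v₂ = ε • v₁ := by
    rw [hv₂def, Matrix.mulVec_smul, hBB]
  -- linear independence
  set d : Fin 3 → ℂ := ![ω, ω * ζ, ω * ζ⁻¹] with hd
  set vs : Fin 3 → (Fin 3 → ℂ) := ![w, v₁, v₂] with hvs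
  have ha1 : ω ≠ ω * ζ := fun h => hζ1 (mul_left_cancel₀ hω0 (by rw [← h, mul_one])).symm
  have ha2 : ω ≠ ω * ζ⁻¹ := fun h => hζi1 (mul_left_cancel₀ hω0 (by rw [← h, mul_one])).symm
  have ha3 : ω * ζ ≠ ω * ζ⁻¹ := fun h => hζζ (mul_left_cancel₀ hω0 h)
  have hdinj : Function.Injective d := by
    intro i j hij
    fin_cases i <;> fin_cases j
    · rfl
    · exact absurd hij ha1
    · exact absurd hij ha2
    · exact absurd hij.symm ha1
    · rfl
    · exact absurd hij ha3
    · exact absurd hij.symm ha2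
    · exact absurd hij.symm ha3
    · rfl
  have hli : LinearIndependent ℂ vs := by
    apply Module.End.eigenvectors_linearIndependent' (Matrix.toLinAlgEquiv' (A : M3)) d hdinj vs
    intro i
    constructor
    · rw [Module.End.mem_eigenspace_iff]
      show (A : M3) *ᵥ vs i = d i • vs i
      fin_cases i
      · simpa [hvs, hd] using hwA
      · simpa [hvs, hd] using hv₁
      · simpa [hvs, hd] using hv₂A
    · fin_cases i
      · simpa [hvs] using hw0
      · simpa [hvs] using hv₁0
      · simpa [hvs] using hv₂0
  set V : M3 := (Matrix.of vs)ᵀ with hV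
  have hVu : IsUnit V := by
    rw [← Matrix.linearIndependent_cols_iff_isUnit]
    simpa [hV, Matrix.transpose_transpose] using hli
  set Q : M3 := !![1,0,0; 0,1,Complex.I; 0,1,-Complex.I] with hQ
  have hQu : IsUnit Q := by
    rw [Matrix.isUnit_iff_isUnit_det, isUnit_iff_ne_zero, Matrix.det_fin_three, hQ]
    simp [Complex.ext_iff]
    norm_num
  -- real matrices
  have hnorm : Complex.normSq ζ = 1 := by
    have h1 : ‖ζ‖ = 1 := Complex.norm_eq_one_of_pow_eq_one hζn hn0
    rw [Complex.normSq_eq_norm_sq, h1, one_pow]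
  have hconj : (starRingEnd ℂ) ζ = ζ⁻¹ := by
    have h1 : ζ * (starRingEnd ℂ) ζ = 1 := by rw [Complex.mul_conj, hnorm]; simp
    exact eq_inv_of_mul_eq_one_right h1
  set x : ℂ := (ζ.re : ℂ) with hx
  set y : ℂ := (ζ.im : ℂ) with hy
  have hζxy : ζ = x + y * Complex.I := (Complex.re_add_im ζ).symm
  have hζixy : ζ⁻¹ = x - y * Complex.I := by
    rw [← hconj]
    have h2 := Complex.re_add_im ((starRingEnd ℂ) ζ)
    rw [Complex.conj_re, Complex.conj_im] at h2
    rw [← h2, hx, hy]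
    push_cast
    ring
  have hrs : ζ.re * ζ.re + ζ.im * ζ.im = 1 := by
    rw [← Complex.normSq_apply]; exact hnorm
  set Rm : Matrix (Fin 3) (Fin 3) ℝ := !![1,0,0; 0,ζ.re,-ζ.im; 0,ζ.im,ζ.re] with hRm
  set Sm : Matrix (Fin 3) (Fin 3) ℝ := !![1,0,0; 0,1,0; 0,0,-1] with hSm
  have hRmU : IsUnit Rm := by
    rw [Matrix.isUnit_iff_isUnit_det, isUnit_iff_ne_zero, Matrix.det_fin_three, hRm]
    norm_num
    simp [hrs]
  have hSmU : IsUnit Sm := by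
    rw [Matrix.isUnit_iff_isUnit_det, isUnit_iff_ne_zero, Matrix.det_fin_three, hSm]
    simp
  have hRmap : Rm.map Complex.ofReal = !![1,0,0; 0,x,-y; 0,y,x] := by
    rw [hRm]
    ext i j
    fin_cases i <;> fin_cases j <;>
      simp [Matrix.map_apply, hx, hy, Matrix.vecHead, Matrix.vecTail]
  have hSmap : Sm.map Complex.ofReal = !![1,0,0; 0,1,0; 0,0,-(1:ℂ)] := by
    rw [hSm]
    ext i j
    fin_cases i <;> fin_cases j <;> simp [Matrix.map_apply, Matrix.vecHead, Matrix.vecTail]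
  set D : M3 := Matrix.diagonal d with hD
  set S₀ : M3 := !![1,0,0; 0,0,1; 0,1,0] with hS₀
  have hAV : (A : M3) * V = V * D := by
    ext i j
    have hcolA : (A : M3) *ᵥ vs j = d j • vs j := by
      fin_cases j
      · simpa [hvs, hd] using hwA
      · simpa [hvs, hd] using hv₁
      · simpa [hvs, hd] using hv₂A
    calc ((A : M3) * V) i j = ((A : M3) *ᵥ vs j) i := by
          simp [hV, Matrix.mul_apply, Matrix.mulVec, dotProduct]
      _ = d j * vs j i := by rw [hcolA]; rfl
      _ = (V * D) i j := by simp [hV, hD, Matrix.mul_diagonal, mul_comm]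
  have e0 : (ε • (B : M3)) *ᵥ w = w := by
    rw [Matrix.smul_mulVec, hwB, smul_smul, hε2, one_smul]
  have e1 : (ε • (B : M3)) *ᵥ v₁ = v₂ := by
    rw [Matrix.smul_mulVec, hv₁B, smul_smul, hε2, one_smul]
  have e2 : (ε • (B : M3)) *ᵥ v₂ = v₁ := by
    rw [Matrix.smul_mulVec, hv₂B, smul_smul, hε2, one_smul]
  have hcolB : ∀ j, (ε • (B : M3)) *ᵥ vs j = vs (![0, 2, 1] j) := by
    intro j
    fin_cases j
    · exact e0
    · exact e1
    · exact e2
  have hBV : (ε • (B : M3)) * V = V * S₀ := by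
    ext i j
    calc ((ε • (B : M3)) * V) i j = ((ε • (B : M3)) *ᵥ vs j) i := by
          simp [hV, Matrix.mul_apply, Matrix.mulVec, dotProduct]
      _ = vs (![0, 2, 1] j) i := by rw [hcolB]
      _ = (V * S₀) i j := by
          fin_cases j <;>
            simp [hV, hS₀, Matrix.mul_apply, Fin.sum_univ_three, Matrix.vecHead, Matrix.vecTail]
  have hDQ : D * Q = Q * (ω • Rm.map Complex.ofReal) := by
    rw [hRmap]
    ext i j
    fin_cases i <;> fin_cases j <;>
      simp [hD, hQ, hd, Matrix.mul_apply, Fin.sum_univ_three, Matrix.diagonal,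
        Matrix.vecHead, Matrix.vecTail] <;>
      first
        | linear_combination ω * hζxy
        | linear_combination (ω * Complex.I) * hζxy + (ω * y) * Complex.I_sq
        | linear_combination ω * hζixy
        | linear_combination (-(ω * Complex.I)) * hζixy + (ω * y) * Complex.I_sq
  have hSQ : S₀ * Q = Q * Sm.map Complex.ofReal := by
    rw [hSmap]
    ext i j
    fin_cases i <;> fin_cases j <;>
      simp [hS₀, hQ, Matrix.mul_apply, Fin.sum_univ_three, Matrix.vecHead, Matrix.vecTail]
  have hVQu : IsUnit (V * Q) := hVu.mul hQu
  refine ⟨hVQu.unit, Rm, Sm, ω, ε, hω0, hε0, hRmU, hSmU, ?_, ?_⟩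
  · rw [IsUnit.unit_spec]
    calc (A : M3) * (V * Q) = ((A : M3) * V) * Q := (mul_assoc _ _ _).symm
      _ = (V * D) * Q := by rw [hAV]
      _ = V * (D * Q) := mul_assoc _ _ _
      _ = V * (Q * (ω • Rm.map Complex.ofReal)) := by rw [hDQ]
      _ = (V * Q) * (ω • Rm.map Complex.ofReal) := (mul_assoc _ _ _).symm
  · rw [IsUnit.unit_spec]
    calc ε • ((B : M3) * (V * Q)) = (ε • (B : M3)) * (V * Q) := (smul_mul_assoc _ _ _).symm
      _ = ((ε • (B : M3)) * V) * Q := (mul_assoc _ _ _).symm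
      _ = (V * S₀) * Q := by rw [hBV]
      _ = V * (S₀ * Q) := mul_assoc _ _ _
      _ = V * (Q * Sm.map Complex.ofReal) := by rw [hSQ]
      _ = (V * Q) * Sm.map Complex.ofReal := (mul_assoc _ _ _).symm
end CoreSection

section Assembly

noncomputable def realHom : Matrix (Fin 3) (Fin 3) ℝ →* Matrix (Fin 3) (Fin 3) ℂ :=
  ((algebraMap ℝ ℂ).mapMatrix.toMonoidHom :
      Matrix (Fin 3) (Fin 3) ℝ →* Matrix (Fin 3) (Fin 3) ℂ)

noncomputable def PGL3R' : Subgroup PGL3C := ((Units.map realHom).range).map proj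

theorem stmt10' (n : ℕ) (hn : 3 ≤ n) (G : Subgroup PGL3C)
    (hG : Nonempty (G ≃* DihedralGroup n)) :
    ∃ φ : PGL3C, Subgroup.map (MulAut.conj φ).toMonoidHom G ≤ PGL3R' := by
  obtain ⟨e⟩ := hG
  have hn0 : n ≠ 0 := by omega
  haveI : NeZero n := ⟨hn0⟩
  set α : ↥G := e.symm (DihedralGroup.r 1) with hα
  set β : ↥G := e.symm (DihedralGroup.sr 0) with hβ
  set a : PGL3C := (α : PGL3C) with ha
  set b : PGL3C := (β : PGL3C) with hb
  -- order of a
  have hords : orderOf α = n := by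
    have h2 : orderOf (e.symm (DihedralGroup.r 1)) = orderOf (DihedralGroup.r 1 : DihedralGroup n) :=
      orderOf_injective e.symm.toMonoidHom e.symm.injective _
    rw [hα, h2, DihedralGroup.orderOf_r_one]
  have horder : orderOf a = n := by
    have h1 : orderOf ((α : PGL3C)) = orderOf α :=
      orderOf_injective G.subtype G.subtype_injective α
    rw [ha, h1, hords]
  have han : a ^ n = 1 := by rw [← horder]; exact pow_orderOf_eq_one a
  -- b² = 1
  have hsr2 : (DihedralGroup.sr 0 : DihedralGroup n) ^ 2 = 1 := by
    rw [sq, DihedralGroup.sr_mul_sr, sub_zero, DihedralGroup.one_def]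
  have hβ2 : β ^ 2 = 1 := by
    rw [hβ, ← map_pow e.symm, hsr2, _root_.map_one]
  have hb2 : b ^ 2 = 1 := by
    rw [hb]
    calc (β : PGL3C) ^ 2 = ((β ^ 2 : ↥G) : PGL3C) := by push_cast; ring
      _ = ((1 : ↥G) : PGL3C) := by rw [hβ2]
      _ = 1 := rfl
  -- dihedral relation
  have hsrinv : (DihedralGroup.sr 0 : DihedralGroup n)⁻¹ = DihedralGroup.sr 0 := by
    apply inv_eq_of_mul_eq_one_right
    rw [DihedralGroup.sr_mul_sr, sub_zero, DihedralGroup.one_def]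
  have hrinv : (DihedralGroup.r 1 : DihedralGroup n)⁻¹ = DihedralGroup.r (-1) := by
    apply inv_eq_of_mul_eq_one_right
    rw [DihedralGroup.r_mul_r, add_neg_cancel, DihedralGroup.one_def]
  have hdih : (DihedralGroup.sr 0 : DihedralGroup n) * DihedralGroup.r 1 *
      (DihedralGroup.sr 0)⁻¹ = (DihedralGroup.r 1)⁻¹ := by
    rw [hsrinv, hrinv, DihedralGroup.sr_mul_r, zero_add, DihedralGroup.sr_mul_sr, zero_sub]
  have hrelG : β * α * β⁻¹ = α⁻¹ := by
    rw [hα, hβ, ← map_inv e.symm, ← map_mul e.symm, ← map_mul e.symm, ← map_inv e.symm, hdih]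
  have hrel : b * a * b⁻¹ = a⁻¹ := by
    rw [ha, hb]
    calc (β : PGL3C) * (α : PGL3C) * (β : PGL3C)⁻¹ = ((β * α * β⁻¹ : ↥G) : PGL3C) := by
          push_cast; ring
      _ = ((α⁻¹ : ↥G) : PGL3C) := by rw [hrelG]
      _ = (α : PGL3C)⁻¹ := by push_cast; ring
  -- generation
  have hgen : G = Subgroup.closure {a, b} := by
    apply le_antisymm
    · intro g hg
      set γ : ↥G := ⟨g, hg⟩ with hγ
      have hgval : g = (γ : PGL3C) := rfl
      have haM : a ∈ Subgroup.closure ({a, b} : Set PGL3C) :=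
        Subgroup.subset_closure (Set.mem_insert _ _)
      have hbM : b ∈ Subgroup.closure ({a, b} : Set PGL3C) :=
        Subgroup.subset_closure (Set.mem_insert_of_mem _ rfl)
      cases heγ : e γ with
      | r i =>
        have h1 : γ = e.symm (DihedralGroup.r i) := by rw [← heγ, MulEquiv.symm_apply_apply]
        have h2 : γ = α ^ i.val := by
          rw [h1, hα, ← map_pow e.symm]
          congr 1
          rw [DihedralGroup.r_one_pow]
          congr 1
          exact (ZMod.natCast_rightInverse i).symm
        rw [hgval, h2]
        push_cast
        exact pow_mem haM _
      | sr i =>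
        have h1 : γ = e.symm (DihedralGroup.sr i) := by rw [← heγ, MulEquiv.symm_apply_apply]
        have h2 : γ = β * α ^ i.val := by
          rw [h1, hα, hβ, ← map_pow e.symm, ← map_mul e.symm]
          congr 1
          rw [DihedralGroup.r_one_pow, DihedralGroup.sr_mul_r, zero_add]
          congr 1
          exact (ZMod.natCast_rightInverse i).symm
        rw [hgval, h2]
        push_cast
        exact mul_mem hbM (pow_mem haM _)
    · rw [Subgroup.closure_le]
      intro t ht
      rcases Set.mem_insert_iff.mp ht with rfl | ht
      · exact SetLike.coe_mem α
      · rw [Set.mem_singleton_iff.mp ht]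
        exact SetLike.coe_mem β
  -- lifts
  obtain ⟨A, hpA, hA⟩ := lift_pow (by omega : 0 < n) a han
  obtain ⟨B, hpB, hB⟩ := lift_pow (by norm_num : 0 < 2) b hb2
  -- non-scalarity
  have hns : ∀ k : ℕ, 0 < k → k < n → ∀ lam : ℂ, (A : M3) ^ k ≠ lam • 1 := by
    intro k hk1 hk2 lam hlam
    have hlam0 : lam ≠ 0 := by
      intro h0
      rw [h0, zero_smul] at hlam
      have hu : IsUnit ((A : M3) ^ k) := by
        rw [← Units.val_pow_eq_pow_val]
        exact Units.isUnit _
      rw [hlam] at hu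
      exact not_isUnit_zero hu
    have hAk : A ^ k = sU lam hlam0 := by
      apply Units.ext
      rw [Units.val_pow_eq_pow_val, hlam]
      rfl
    have hak : a ^ k = 1 := by
      rw [← hpA, ← map_pow, hAk, proj_sU]
    have hdvd := orderOf_dvd_of_pow_eq_one hak
    rw [horder] at hdvd
    have := Nat.le_of_dvd hk1 hdvd
    omega
  -- relation at matrix level
  have hba : proj (B * A * B⁻¹) = proj (A⁻¹) := by
    rw [_root_.map_mul, _root_.map_mul, _root_.map_inv, _root_.map_inv, hpA, hpB]
    exact hrel
  obtain ⟨z, hz, hzeq⟩ := (QuotientGroup.mk'_eq_mk' _).mp hba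
  obtain ⟨c₀, hc₀, hc₀val⟩ := center_scalar hz
  have hc : c₀⁻¹ ≠ 0 := inv_ne_zero hc₀
  have hz' : z = sU c₀ hc₀ := Units.ext hc₀val
  have h1 : B * A = A⁻¹ * z⁻¹ * B := by rw [← hzeq]; group
  have hzinv : (z⁻¹ : GL (Fin 3) ℂ) = sU c₀⁻¹ hc := by rw [hz']; exact Units.ext rfl
  have hrelm : (B : M3) * (A : M3) = c₀⁻¹ • (((A⁻¹ : GL (Fin 3) ℂ) : M3) * (B : M3)) := by
    have h2 := congrArg Units.val h1
    rw [hzinv] at h2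
    show ((B * A : GL (Fin 3) ℂ) : M3) = _
    rw [h2]
    show ((A⁻¹ : GL (Fin 3) ℂ) : M3) * (c₀⁻¹ • (1 : M3)) * (B : M3) = _
    rw [mul_smul_comm, mul_one, smul_mul_assoc]
  -- apply the core result
  obtain ⟨P, R, S, ω, ε, hω0, hε0, hRu, hSu, hAP, hBP⟩ := core hn A B hc hA hB hns hrelm
  refine ⟨proj P⁻¹, ?_⟩
  rw [hgen, MonoidHom.map_closure, Subgroup.closure_le]
  have hφinv : (proj P⁻¹)⁻¹ = proj P := by rw [_root_.map_inv, inv_inv]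
  have hmapR : realHom R = R.map Complex.ofReal := by
    show (algebraMap ℝ ℂ).mapMatrix R = _
    rw [RingHom.mapMatrix_apply]
    rfl
  have hmapS : realHom S = S.map Complex.ofReal := by
    show (algebraMap ℝ ℂ).mapMatrix S = _
    rw [RingHom.mapMatrix_apply]
    rfl
  have hPPi : ((P⁻¹ : GL (Fin 3) ℂ) : M3) * (P : M3) = 1 :=
    congrArg Units.val (inv_mul_cancel P)
  intro t ht
  obtain ⟨u, hu, rfl⟩ := ht
  rcases Set.mem_insert_iff.mp hu with rfl | hu
  · -- image of a
    show (MulAut.conj (proj P⁻¹)) a ∈ PGL3R'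
    have hPAP : P⁻¹ * A * P = sU ω hω0 * Units.map realHom hRu.unit := by
      apply Units.ext
      show ((P⁻¹ : GL (Fin 3) ℂ) : M3) * (A : M3) * (P : M3) = _
      rw [mul_assoc, hAP, ← mul_assoc, hPPi, one_mul]
      show ω • R.map Complex.ofReal
        = ((sU ω hω0 : GL (Fin 3) ℂ) : M3) * (realHom (hRu.unit : Matrix (Fin 3) (Fin 3) ℝ))
      rw [sU_val, IsUnit.unit_spec, hmapR, smul_mul_assoc, one_mul]
    have hconj : (MulAut.conj (proj P⁻¹)) a = proj (P⁻¹ * A * P) := by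
      rw [MulAut.conj_apply, hφinv, ← hpA, ← _root_.map_mul, ← _root_.map_mul]
    rw [hconj, hPAP, _root_.map_mul, proj_sU, one_mul]
    exact ⟨Units.map realHom hRu.unit, MonoidHom.mem_range.mpr ⟨hRu.unit, rfl⟩, rfl⟩
  · -- image of b
    rw [Set.mem_singleton_iff.mp hu]
    show (MulAut.conj (proj P⁻¹)) b ∈ PGL3R'
    have hPBP : P⁻¹ * (sU ε hε0 * B) * P = Units.map realHom hSu.unit := by
      apply Units.ext
      have hv : ((sU ε hε0 * B : GL (Fin 3) ℂ) : M3) = ε • (B : M3) := by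
        show (ε • (1 : M3)) * (B : M3) = _
        rw [smul_mul_assoc, one_mul]
      show ((P⁻¹ : GL (Fin 3) ℂ) : M3) * ((sU ε hε0 * B : GL (Fin 3) ℂ) : M3) * (P : M3) = _
      have hsm : ε • ((B : M3) * (P : M3)) = (ε • (B : M3)) * (P : M3) :=
        (smul_mul_assoc _ _ _).symm
      rw [hv, mul_assoc, ← hsm, hBP, ← mul_assoc, hPPi, one_mul]
      show S.map Complex.ofReal = realHom (hSu.unit : Matrix (Fin 3) (Fin 3) ℝ)
      rw [IsUnit.unit_spec, hmapS]
    have hconjb : (MulAut.conj (proj P⁻¹)) b = proj (P⁻¹ * (sU ε hε0 * B) * P) := by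
      have h3 : proj (P⁻¹ * (sU ε hε0 * B) * P) = (proj P⁻¹) * b * proj P := by
        rw [_root_.map_mul, _root_.map_mul, _root_.map_mul, proj_sU, one_mul, hpB]
      rw [MulAut.conj_apply, hφinv, h3]
    rw [hconjb, hPBP]
    exact ⟨Units.map realHom hSu.unit, MonoidHom.mem_range.mpr ⟨hSu.unit, rfl⟩, rfl⟩
end Assembly

theorem stmt10 (n : ℕ) (hn : 3 ≤ n) (G : Subgroup PGL3C)
    (hG : Nonempty (G ≃* DihedralGroup n)) :
    ∃ φ : PGL3C, Subgroup.map (MulAut.conj φ).toMonoidHom G ≤ PGL3R := by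
  exact stmt10' n hn G hG
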